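/- With h_z and g_z defined as above for 0 < λ < 1, l ≥ 0, n ≥ l+1, the slope ratio (h_{z+1} - h_z)/(g_{z+1} - g_z) is strictly increasing in z for l ≤ z ≤ n. Equivalently, (h_{z+1}-h_z)/(g_{z+1}-g_z) - 1 = (z Δ_{z-1,l} - B_{z,l})/((n-z) Δ_{z,l} + B_{z,l}) where Δ_{z,l} = B_{z,l}(ν) - B_{z+1,l}(ν), and this expression is strictly increasing in z. -/

import Mathlib

/-- Binomial CDF: `B z l p = ∑_{j=0}^{l} C(z,j) p^j (1-p)^{z-j}`. -/
noncomputable def binCDF (z l : ℕ) (p : ℝ) : ℝ :=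
  ∑ j ∈ Finset.range (l + 1), (z.choose j : ℝ) * p ^ j * (1 - p) ^ (z - j)

/-- `h_z(l,n,λ)`. -/
noncomputable def hFun (l n z : ℕ) (lam : ℝ) : ℝ :=
  if z ≤ l then 1
  else (((n : ℝ) - z + 1) * binCDF z l (1 - lam)
        + (z : ℝ) * binCDF (z - 1) l (1 - lam)) / ((n : ℝ) + 1)

/-- `g_z(l,n,λ)`. -/
noncomputable def gFun (l n z : ℕ) (lam : ℝ) : ℝ :=
  if z ≤ l then ((n : ℝ) - z + 1) / ((n : ℝ) + 1)
  else ((n : ℝ) - z + 1) * binCDF z l (1 - lam) / ((n : ℝ) + 1)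

/-- `Δ_{z,l} = B_{z,l}(ν) - B_{z+1,l}(ν)`. -/
noncomputable def Delta (z l : ℕ) (lam : ℝ) : ℝ :=
  binCDF z l (1 - lam) - binCDF (z + 1) l (1 - lam)

/-- The slope ratio `(h_{z+1}-h_z)/(g_{z+1}-g_z)`. -/
noncomputable def slopeRatio (l n z : ℕ) (lam : ℝ) : ℝ :=
  (hFun l n (z + 1) lam - hFun l n z lam) / (gFun l n (z + 1) lam - gFun l n z lam)

lemma binCDF_eq_one {z l : ℕ} (p : ℝ) (h : z ≤ l) : binCDF z l p = 1 := by
  unfold binCDF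
  rw [← Finset.sum_subset (Finset.range_subset_range.mpr (by omega : z + 1 ≤ l + 1))
    (fun x hx hx' => by
      have hz : z < x := by simp only [Finset.mem_range] at hx'; omega
      simp [Nat.choose_eq_zero_of_lt hz])]
  calc ∑ j ∈ Finset.range (z+1), (z.choose j : ℝ) * p ^ j * (1 - p) ^ (z - j)
      = ∑ k ∈ Finset.range (z+1), p ^ k * (1-p) ^ (z-k) * (z.choose k) :=
        Finset.sum_congr rfl fun j _ => by ring
    _ = (p + (1-p))^z := (add_pow p (1-p) z).symm
    _ = 1 := by norm_num

lemma binCDF_pos {p : ℝ} (h0 : 0 ≤ p) (h1 : p < 1) (z l : ℕ) : 0 < binCDF z l p := by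
  have hq : (0:ℝ) < 1 - p := by linarith
  unfold binCDF
  apply Finset.sum_pos'
  · intro i _; positivity
  · exact ⟨0, Finset.mem_range.mpr (Nat.succ_pos l), by simp; positivity⟩

lemma binCDF_delta (p : ℝ) : ∀ l z : ℕ, l ≤ z →
    binCDF z l p - binCDF (z+1) l p = (z.choose l : ℝ) * p^(l+1) * (1-p)^(z-l) := by
  intro l
  induction l with
  | zero =>
    intro z _
    unfold binCDF
    rw [Finset.sum_range_one, Finset.sum_range_one]
    simp only [Nat.choose_zero_right, Nat.cast_one, pow_zero, Nat.sub_zero, one_mul]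
    ring
  | succ l ih =>
    intro z hz
    obtain ⟨a, rfl⟩ : ∃ a, z = l + 1 + a := ⟨z - (l+1), by omega⟩
    have e1 : binCDF (l+1+a) (l+1) p
        = binCDF (l+1+a) l p + ((l+1+a).choose (l+1):ℝ)*p^(l+1)*(1-p)^((l+1+a)-(l+1)) := by
      unfold binCDF; rw [Finset.sum_range_succ]
    have e2 : binCDF (l+1+a+1) (l+1) p
        = binCDF (l+1+a+1) l p + ((l+1+a+1).choose (l+1):ℝ)*p^(l+1)*(1-p)^((l+1+a+1)-(l+1)) := by
      unfold binCDF; rw [Finset.sum_range_succ]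
    have e3 := ih (l+1+a) (by omega)
    have s1 : (l+1+a) - (l+1) = a := by omega
    have s2 : (l+1+a+1) - (l+1) = a + 1 := by omega
    have s3 : (l+1+a) - l = a + 1 := by omega
    have s5 : (l+1+a+1).choose (l+1) = (l+1+a).choose l + (l+1+a).choose (l+1) :=
      Nat.choose_succ_succ (l+1+a) l
    rw [s3] at e3
    rw [e1, e2, s1, s2, s5]
    push_cast
    linear_combination e3

lemma Delta_eq (lam : ℝ) {l z : ℕ} (h : l ≤ z) :
    Delta z l lam = (z.choose l : ℝ) * (1-lam)^(l+1) * lam^(z-l) := by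
  have := binCDF_delta (1 - lam) l z h
  rw [sub_sub_cancel] at this
  exact this

lemma Delta_pos {lam : ℝ} (h0 : 0 < lam) (h1 : lam < 1) {l z : ℕ} (h : l ≤ z) :
    0 < Delta z l lam := by
  rw [Delta_eq lam h]
  have hc : 0 < (z.choose l : ℝ) := by exact_mod_cast Nat.choose_pos h
  have h2 : (0:ℝ) < 1 - lam := by linarith
  positivity

lemma choose_ineq {z l j : ℕ} (hl : l ≤ z) (hj : j ≤ l) :
    z.choose l * (z+1).choose j ≤ (z+1).choose l * z.choose j := by
  have h1 := Nat.choose_mul_succ_eq z l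
  have h2 := Nat.choose_mul_succ_eq z j
  have e : z.choose l * (z+1).choose j * (z+1-j) = (z+1).choose l * z.choose j * (z+1-l) := by
    calc z.choose l * (z+1).choose j * (z+1-j)
        = z.choose l * ((z+1).choose j * (z+1-j)) := by ring
      _ = z.choose l * (z.choose j * (z+1)) := by rw [← h2]
      _ = (z.choose l * (z+1)) * z.choose j := by ring
      _ = ((z+1).choose l * (z+1-l)) * z.choose j := by rw [h1]
      _ = (z+1).choose l * z.choose j * (z+1-l) := by ring
  have hle : z.choose l * (z+1).choose j * (z+1-j) ≤ (z+1).choose l * z.choose j * (z+1-j) :=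
    e.le.trans (Nat.mul_le_mul_left _ (by omega))
  exact Nat.le_of_mul_le_mul_right hle (by omega)

lemma key_mono {lam : ℝ} (h0 : 0 < lam) (h1 : lam < 1) {l z : ℕ} (hz : l ≤ z) :
    Delta z l lam * binCDF (z+1) l (1-lam) ≤ Delta (z+1) l lam * binCDF z l (1-lam) := by
  have hnu : (0:ℝ) ≤ 1 - lam := by linarith
  have main : (z.choose l : ℝ) * binCDF (z+1) l (1-lam)
      ≤ ((z+1).choose l : ℝ) * (lam * binCDF z l (1-lam)) := by
    unfold binCDF
    rw [Finset.mul_sum, Finset.mul_sum, Finset.mul_sum]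
    apply Finset.sum_le_sum
    intro j hj
    have hjl : j ≤ l := by simp only [Finset.mem_range] at hj; omega
    have hjz : j ≤ z := hjl.trans hz
    have hc : ((z.choose l * (z+1).choose j : ℕ) : ℝ) ≤ ((z+1).choose l * z.choose j : ℕ) := by
      exact_mod_cast choose_ineq hz hjl
    push_cast at hc
    have hs : z + 1 - j = (z - j) + 1 := by omega
    rw [sub_sub_cancel, hs, pow_succ]
    calc (z.choose l : ℝ) * ((z+1).choose j * (1-lam)^j * (lam^(z-j) * lam))
        = ((z.choose l : ℝ) * (z+1).choose j) * ((1-lam)^j * lam^(z-j) * lam) := by ring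
      _ ≤ (((z+1).choose l : ℝ) * z.choose j) * ((1-lam)^j * lam^(z-j) * lam) := by
          apply mul_le_mul_of_nonneg_right hc
          positivity
      _ = ((z+1).choose l : ℝ) * (lam * ((z.choose j : ℝ) * (1-lam)^j * lam^(z-j))) := by ring
  rw [Delta_eq lam hz, Delta_eq lam (hz.trans (Nat.le_succ z)),
    show z + 1 - l = (z - l) + 1 from by omega, pow_succ]
  calc (z.choose l:ℝ) * (1-lam)^(l+1) * lam^(z-l) * binCDF (z+1) l (1-lam)
      = ((1-lam)^(l+1) * lam^(z-l)) * ((z.choose l:ℝ) * binCDF (z+1) l (1-lam)) := by ring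
    _ ≤ ((1-lam)^(l+1) * lam^(z-l)) * (((z+1).choose l:ℝ) * (lam * binCDF z l (1-lam))) := by
        apply mul_le_mul_of_nonneg_left main
        positivity
    _ = ((z+1).choose l:ℝ) * (1-lam)^(l+1) * (lam^(z-l) * lam) * binCDF z l (1-lam) := by ring

lemma deltaRec (lam : ℝ) {l z : ℕ} (hz : l ≤ z) :
    lam * (((z:ℝ)+1) * Delta z l lam) = ((z:ℝ) - l + 1) * Delta (z+1) l lam := by
  rw [Delta_eq lam hz, Delta_eq lam (by omega : l ≤ z + 1)]
  have hnat := Nat.choose_mul_succ_eq z l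
  have hcast : (z.choose l:ℝ) * ((z:ℝ)+1) = ((z+1).choose l:ℝ) * ((z:ℝ)+1-l) := by
    have := congrArg (Nat.cast : ℕ → ℝ) hnat
    push_cast [Nat.cast_sub (show l ≤ z+1 by omega)] at this
    linarith
  rw [show z + 1 - l = (z - l) + 1 from by omega, pow_succ]
  linear_combination (lam * (1-lam)^(l+1) * lam^(z-l)) * hcast

lemma core_ineq {lam c m d e B1 B2 : ℝ} (h0 : 0 < lam) (h1 : lam < 1) (hc : 0 ≤ c)
    (hm : 1 ≤ m) (hd : 0 < d) (he : 0 < e) (hB1 : 0 < B1) (hB2 : 0 < B2)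
    (h3 : d * B2 ≤ e * B1) :
    (c*d - lam*B1) * ((m-1)*e + B2) < ((c+1)*e - lam*B2) * (m*d + B1) := by
  nlinarith [mul_nonneg hc (sub_nonneg.mpr h3),
    mul_nonneg (mul_nonneg h0.le (by linarith : (0:ℝ) ≤ m)) (sub_nonneg.mpr h3),
    mul_nonneg (mul_nonneg hc hd.le) he.le,
    mul_pos he hd,
    mul_nonneg (mul_nonneg he.le hd.le) (by linarith : (0:ℝ) ≤ m - 1),
    mul_pos (mul_pos (by linarith : (0:ℝ) < 1 - lam) he) hB1]


lemma zDelta_zero {lam : ℝ} {l z : ℕ} (hz : z = l) :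
    (z:ℝ) * Delta (z-1) l lam = 0 := by
  rcases Nat.eq_zero_or_pos z with h|h
  · simp [h]
  · have hD : Delta (z-1) l lam = 0 := by
      unfold Delta
      rw [Nat.sub_add_cancel (by omega : 1 ≤ z), binCDF_eq_one _ (by omega),
        binCDF_eq_one _ (by omega)]
      ring
    rw [hD, mul_zero]

lemma hdiff (lam : ℝ) (l n z : ℕ) (hz : l ≤ z) :
    hFun l n (z+1) lam - hFun l n z lam
      = -((((n:ℝ) - z) * Delta z l lam + (z:ℝ) * Delta (z-1) l lam)) / ((n:ℝ)+1) := by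
  have hn1 : ((n:ℝ)+1) ≠ 0 := by positivity
  rcases Nat.eq_or_lt_of_le hz with heq | hlt
  · -- z = l
    rw [hFun, hFun, if_pos (by omega : z ≤ l), if_neg (by omega : ¬ (z+1 ≤ l))]
    rw [zDelta_zero heq.symm]
    have hB : binCDF z l (1-lam) = 1 := binCDF_eq_one _ (by omega)
    unfold Delta
    rw [Nat.add_sub_cancel, hB]
    push_cast
    field_simp
    ring
  · -- l < z
    rw [hFun, hFun, if_neg (by omega : ¬ (z+1 ≤ l)), if_neg (by omega : ¬ (z ≤ l))]
    unfold Delta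
    rw [Nat.add_sub_cancel, Nat.sub_add_cancel (by omega : 1 ≤ z)]
    push_cast
    field_simp
    ring

lemma gdiff (lam : ℝ) (l n z : ℕ) (hz : l ≤ z) :
    gFun l n (z+1) lam - gFun l n z lam
      = -((((n:ℝ) - z) * Delta z l lam + binCDF z l (1-lam))) / ((n:ℝ)+1) := by
  have hn1 : ((n:ℝ)+1) ≠ 0 := by positivity
  rcases Nat.eq_or_lt_of_le hz with heq | hlt
  · rw [gFun, gFun, if_pos (by omega : z ≤ l), if_neg (by omega : ¬ (z+1 ≤ l))]
    have hB : binCDF z l (1-lam) = 1 := binCDF_eq_one _ (by omega)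
    unfold Delta
    rw [hB]
    push_cast
    field_simp
    ring
  · rw [gFun, gFun, if_neg (by omega : ¬ (z+1 ≤ l)), if_neg (by omega : ¬ (z ≤ l))]
    unfold Delta
    push_cast
    field_simp
    ring

lemma ratio_formula {lam : ℝ} (h0 : 0 < lam) (h1 : lam < 1) (l n z : ℕ)
    (hzl : l ≤ z) (hzn : z ≤ n) :
    slopeRatio l n z lam - 1
      = ((z : ℝ) * Delta (z - 1) l lam - binCDF z l (1 - lam)) /
          (((n : ℝ) - z) * Delta z l lam + binCDF z l (1 - lam)) := by
  have hB : 0 < binCDF z l (1-lam) := binCDF_pos (by linarith) (by linarith) z l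
  have hD : 0 ≤ Delta z l lam := (Delta_pos h0 h1 hzl).le
  have hnz : (0:ℝ) ≤ (n:ℝ) - z := sub_nonneg.mpr (by exact_mod_cast hzn)
  have hden : 0 < ((n:ℝ) - z) * Delta z l lam + binCDF z l (1-lam) :=
    add_pos_of_nonneg_of_pos (mul_nonneg hnz hD) hB
  have hn1 : (0:ℝ) < (n:ℝ)+1 := by positivity
  unfold slopeRatio
  rw [hdiff lam l n z hzl, gdiff lam l n z hzl]
  have key : ∀ U V : ℝ, V ≠ 0 → (-U/((n:ℝ)+1)) / (-V/((n:ℝ)+1)) = U / V := by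
    intro U V hV
    field_simp
  rw [key _ _ hden.ne', div_sub_one hden.ne']
  congr 1
  ring

lemma core_ineq2 {lam c m d e B1 B2 P Q : ℝ} (h0 : 0 < lam) (h1 : lam < 1) (hc : 0 ≤ c)
    (hm : 1 ≤ m) (hd : 0 < d) (he : 0 < e) (hB1 : 0 < B1) (hB2 : 0 < B2)
    (h3 : d * B2 ≤ e * B1) (hP : lam * P = c * d) (hQ : lam * Q = (c+1)*e) :
    (P - B1) * ((m-1)*e + B2) < (Q - B2) * (m*d + B1) := by
  have core := core_ineq h0 h1 hc hm hd he hB1 hB2 h3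
  have hmul : lam * ((P - B1) * ((m-1)*e + B2)) < lam * ((Q - B2)*(m*d+B1)) := by
    calc lam * ((P - B1) * ((m-1)*e + B2)) = (lam*P - lam*B1)*((m-1)*e+B2) := by ring
      _ = (c*d - lam*B1)*((m-1)*e+B2) := by rw [hP]
      _ < ((c+1)*e - lam*B2)*(m*d+B1) := core
      _ = (lam*Q - lam*B2)*(m*d+B1) := by rw [hQ]
      _ = lam * ((Q - B2)*(m*d+B1)) := by ring
  exact (mul_lt_mul_iff_right₀ h0).mp hmul

lemma step_mono {lam : ℝ} (h0 : 0 < lam) (h1 : lam < 1) (l n z : ℕ)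
    (hzl : l ≤ z) (hzn : z + 1 ≤ n) :
    slopeRatio l n z lam < slopeRatio l n (z+1) lam := by
  have hB1 : 0 < binCDF z l (1-lam) := binCDF_pos (by linarith) (by linarith) _ _
  have hB2 : 0 < binCDF (z+1) l (1-lam) := binCDF_pos (by linarith) (by linarith) _ _
  have hd : 0 < Delta z l lam := Delta_pos h0 h1 hzl
  have he : 0 < Delta (z+1) l lam := Delta_pos h0 h1 (hzl.trans (Nat.le_succ z))
  have hm : (1:ℝ) ≤ (n:ℝ) - z := by
    have : ((z+1:ℕ):ℝ) ≤ (n:ℝ) := by exact_mod_cast hzn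
    push_cast at this; linarith
  have hc : (0:ℝ) ≤ (z:ℝ) - l := by
    have : ((l:ℕ):ℝ) ≤ (z:ℝ) := by exact_mod_cast hzl
    linarith
  have hA3 := key_mono h0 h1 hzl
  have hQ : lam * (((z:ℝ)+1) * Delta z l lam) = (((z:ℝ)-l)+1) * Delta (z+1) l lam := by
    have := deltaRec lam hzl
    calc lam * (((z:ℝ)+1) * Delta z l lam) = ((z:ℝ) - l + 1) * Delta (z+1) l lam := this
      _ = _ := by ring
  have hP : lam * ((z:ℝ) * Delta (z-1) l lam) = ((z:ℝ)-l) * Delta z l lam := by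
    rcases Nat.eq_or_lt_of_le hzl with heq | hlt
    · rw [zDelta_zero heq.symm, mul_zero, heq]; ring
    · have h' := deltaRec lam (by omega : l ≤ z - 1)
      rw [Nat.sub_add_cancel (by omega : 1 ≤ z)] at h'
      have hz1 : ((z-1 : ℕ):ℝ) = (z:ℝ) - 1 := by
        push_cast [Nat.cast_sub (by omega : 1 ≤ z)]; ring
      rw [hz1] at h'
      calc lam * ((z:ℝ)*Delta (z-1) l lam) = lam * (((z:ℝ)-1+1)*Delta (z-1) l lam) := by ring
        _ = ((z:ℝ)-1-l+1)*Delta z l lam := h'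
        _ = ((z:ℝ)-l)*Delta z l lam := by ring
  have f1 := ratio_formula h0 h1 l n z hzl (by omega)
  have f2 := ratio_formula h0 h1 l n (z+1) (by omega) hzn
  rw [Nat.add_sub_cancel] at f2
  have hnz : (0:ℝ) ≤ (n:ℝ) - z := by linarith
  have hnz1 : (0:ℝ) ≤ (n:ℝ) - ((z:ℝ)+1) := by linarith
  have hD1 : 0 < ((n:ℝ) - z) * Delta z l lam + binCDF z l (1-lam) :=
    add_pos_of_nonneg_of_pos (mul_nonneg hnz hd.le) hB1
  have hD2 : 0 < ((n:ℝ) - ((z+1:ℕ):ℝ)) * Delta (z+1) l lam + binCDF (z+1) l (1-lam) := by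
    push_cast
    exact add_pos_of_nonneg_of_pos (mul_nonneg hnz1 he.le) hB2
  have hsub : slopeRatio l n z lam - 1 < slopeRatio l n (z+1) lam - 1 := by
    rw [f1, f2, div_lt_div_iff₀ hD1 hD2]
    have target := core_ineq2 (m := (n:ℝ) - z) h0 h1 hc hm hd he hB1 hB2 hA3 hP hQ
    push_cast
    refine lt_of_eq_of_lt ?_ (target.trans_eq ?_) <;> ring
  linarith


theorem stmt_17 (lam : ℝ) (hlam0 : 0 < lam) (hlam1 : lam < 1)
    (l n : ℕ) (hn : l + 1 ≤ n) :
    (∀ z : ℕ, l ≤ z → z ≤ n →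
      slopeRatio l n z lam - 1
        = ((z : ℝ) * Delta (z - 1) l lam - binCDF z l (1 - lam)) /
            (((n : ℝ) - z) * Delta z l lam + binCDF z l (1 - lam))) ∧
    (∀ z₁ z₂ : ℕ, l ≤ z₁ → z₁ < z₂ → z₂ ≤ n →
      slopeRatio l n z₁ lam < slopeRatio l n z₂ lam) := by
  constructor
  · intro z hzl hzn
    exact ratio_formula hlam0 hlam1 l n z hzl hzn
  · intro z₁ z₂ h1 h2
    induction z₂, h2 using Nat.le_induction with
    | base =>
      intro h3
      exact step_mono hlam0 hlam1 l n z₁ h1 h3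
    | succ k hk ih =>
      intro h3
      have hstep := step_mono hlam0 hlam1 l n k (by omega) h3
      exact (ih (by omega)).trans hstep
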